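/- Let T > 0, let f ∈ L¹(0,T), let g ∈ L∞(0,T) with g ≥ 0 a.e. in (0,T), and let g₀ ∈ ℝ (playing the role of the initial value g(0)). Then the following two assertions are equivalent: (i) for every continuously differentiable function φ : [0,T] → ℝ with φ ≥ 0 and φ' ≤ 0 on [0,T] and φ(T) = 0, one has −∫₀ᵀ φ'(t) g(t) dt − φ(0) g₀ + ∫₀ᵀ φ(t) f(t) dt ≤ 0; (ii) g(t) − g₀ + ∫₀ᵗ f(s) ds ≤ 0 for almost every t ∈ (0,T). -/

import Mathlib

open Set MeasureTheory Filter Topology intervalIntegral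

lemma my_fubini (T : ℝ) (hT : 0 < T) (f ψ : ℝ → ℝ)
    (hf : IntegrableOn f (Ioo 0 T)) (hψ : Continuous ψ) :
    ∫ s in Ioo 0 T, (∫ t in Ioo s T, ψ t) * f s
      = ∫ t in Ioo 0 T, ψ t * ∫ s in Ioo 0 t, f s := by
  set μ := volume.restrict (Ioo (0:ℝ) T) with hμ
  obtain ⟨M, hM⟩ := (isCompact_Icc (a := (0:ℝ)) (b := T)).exists_bound_of_continuousOn
    hψ.continuousOn
  have hM0 : 0 ≤ M := le_trans (norm_nonneg _) (hM 0 (left_mem_Icc.2 hT.le))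
  set G : ℝ → ℝ → ℝ := fun s t => Set.indicator (Ioi s) ψ t * f s with hG
  have hGunc : Function.uncurry G
      = fun p : ℝ × ℝ => Set.indicator {q : ℝ × ℝ | q.1 < q.2} (fun q => ψ q.2) p * f p.1 := by
    funext p
    simp only [Function.uncurry, hG, Set.indicator_apply, mem_Ioi, Set.mem_setOf_eq]
  have hGmeas : AEStronglyMeasurable (Function.uncurry G) (μ.prod μ) := by
    rw [hGunc]
    exact (((hψ.measurable.comp measurable_snd).indicator
      (measurableSet_lt measurable_fst measurable_snd)).aestronglyMeasurable).mul hf.1.comp_fst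
  have hae2 : ∀ᵐ p : ℝ × ℝ ∂(μ.prod μ), p.2 ∈ Ioo (0:ℝ) T := by
    rw [hμ, Measure.prod_restrict]
    exact Filter.Eventually.mono (ae_restrict_mem (measurableSet_Ioo.prod measurableSet_Ioo))
      (fun p hp => hp.2)
  have hGint : Integrable (Function.uncurry G) (μ.prod μ) := by
    refine Integrable.mono' (hf.norm.mul_prod (integrable_const M)) hGmeas ?_
    filter_upwards [hae2] with p hp
    have h1 : |Set.indicator (Ioi p.1) ψ p.2| ≤ M := by
      rw [Set.indicator_apply]
      split_ifs with h
      · exact hM p.2 (Ioo_subset_Icc_self hp)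
      · simpa using hM0
    calc ‖Function.uncurry G p‖ = |Set.indicator (Ioi p.1) ψ p.2| * |f p.1| := by
          simp [Function.uncurry, hG, abs_mul]
      _ ≤ M * |f p.1| := by
          exact mul_le_mul_of_nonneg_right h1 (abs_nonneg _)
      _ = ‖f p.1‖ * M := by rw [Real.norm_eq_abs]; ring
  have hswap := integral_integral_swap hGint
  have hleft : ∫ s, ∫ t, G s t ∂μ ∂μ = ∫ s in Ioo 0 T, (∫ t in Ioo s T, ψ t) * f s := by
    refine integral_congr_ae ?_
    filter_upwards [ae_restrict_mem measurableSet_Ioo] with s hs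
    have : ∫ t, G s t ∂μ = ∫ t in Ioo s T, ψ t * f s := by
      rw [hμ]
      have : ∀ t, G s t = Set.indicator (Ioi s) (fun u => ψ u * f s) t := by
        intro t; simp [hG, Set.indicator_apply, ite_mul]
      simp_rw [this]
      rw [MeasureTheory.integral_indicator measurableSet_Ioi,
        Measure.restrict_restrict measurableSet_Ioi]
      have hset : Ioi s ∩ Ioo 0 T = Ioo s T := by
        ext x
        simp only [mem_inter_iff, mem_Ioi, mem_Ioo]
        constructor
        · rintro ⟨h1, h2, h3⟩; exact ⟨h1, h3⟩
        · rintro ⟨h1, h2⟩; exact ⟨h1, lt_trans hs.1 h1, h2⟩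
      rw [hset]
    rw [this, MeasureTheory.integral_mul_const]
  have hright : ∫ t, ∫ s, G s t ∂μ ∂μ = ∫ t in Ioo 0 T, ψ t * ∫ s in Ioo 0 t, f s := by
    refine integral_congr_ae ?_
    filter_upwards [ae_restrict_mem measurableSet_Ioo] with t ht
    have : ∀ s, G s t = ψ t * Set.indicator (Iio t) f s := by
      intro s
      simp only [hG, Set.indicator_apply, mem_Ioi, mem_Iio]
      split_ifs <;> ring
    simp_rw [this]
    rw [MeasureTheory.integral_const_mul, hμ, MeasureTheory.integral_indicator measurableSet_Iio,
      Measure.restrict_restrict measurableSet_Iio]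
    have hset : Iio t ∩ Ioo 0 T = Ioo 0 t := by
      ext x
      simp only [mem_inter_iff, mem_Iio, mem_Ioo]
      constructor
      · rintro ⟨h1, h2, h3⟩; exact ⟨h2, h1⟩
      · rintro ⟨h1, h2⟩; exact ⟨h2, h1, lt_trans h2 ht.2⟩
    rw [hset]
  rw [← hleft, hswap, hright]

lemma my_F_contOn (T : ℝ) (f : ℝ → ℝ) (hf : IntegrableOn f (Ioo 0 T)) :
    ContinuousOn (fun x => ∫ s in Ioo 0 x, f s) (Icc 0 T) := by
  have h1 : IntegrableOn f (Icc 0 T) := (integrableOn_Icc_iff_integrableOn_Ioo (ha := enorm_ne_top) (hb := enorm_ne_top)).2 hf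
  have h2 := intervalIntegral.continuousOn_primitive (f := f) (a := 0) (b := T) h1
  have : (fun x => ∫ s in Ioc (0:ℝ) x, f s) = fun x => ∫ s in Ioo (0:ℝ) x, f s := by
    funext x; exact MeasureTheory.integral_Ioc_eq_integral_Ioo
  rwa [this] at h2

lemma my_F_int (T : ℝ) (f : ℝ → ℝ) (hf : IntegrableOn f (Ioo 0 T)) :
    IntegrableOn (fun x => ∫ s in Ioo 0 x, f s) (Ioo 0 T) :=
  ((my_F_contOn T f hf).integrableOn_Icc).mono_set Ioo_subset_Icc_self

lemma key_identity (T : ℝ) (hT : 0 < T) (f g : ℝ → ℝ) (g₀ : ℝ)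
    (hf : IntegrableOn f (Ioo 0 T)) (hg : IntegrableOn g (Ioo 0 T))
    (φ : ℝ → ℝ) (hφ : ContDiff ℝ 1 φ) (hφT : φ T = 0) :
    -(∫ t in Ioo 0 T, deriv φ t * g t) - φ 0 * g₀ + ∫ t in Ioo 0 T, φ t * f t
      = ∫ t in Ioo 0 T, (-deriv φ t) * (g t - g₀ + ∫ s in Ioo 0 t, f s) := by
  have hdc : Continuous (deriv φ) := hφ.continuous_deriv le_rfl
  obtain ⟨M, hM⟩ := (isCompact_Icc (a := (0:ℝ)) (b := T)).exists_bound_of_continuousOn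
    (hdc.neg.continuousOn)
  have hφrep : ∀ s, s ≤ T → φ s = ∫ t in s..T, -deriv φ t := by
    intro s hs
    rw [intervalIntegral.integral_neg,
      intervalIntegral.integral_deriv_eq_sub
        (fun x _ => (hφ.differentiable one_ne_zero).differentiableAt)
        (hdc.intervalIntegrable _ _), hφT]
    ring
  have hφ0 : φ 0 = ∫ t in Ioo 0 T, -deriv φ t := by
    rw [hφrep 0 hT.le, intervalIntegral.integral_of_le hT.le,
      MeasureTheory.integral_Ioc_eq_integral_Ioo]
  -- Fubini
  have hfub := my_fubini T hT f (fun t => -deriv φ t) hf hdc.neg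
  have hfub' : ∫ t in Ioo 0 T, φ t * f t
      = ∫ t in Ioo 0 T, (-deriv φ t) * ∫ s in Ioo 0 t, f s := by
    rw [← hfub]
    refine setIntegral_congr_ae measurableSet_Ioo ?_
    filter_upwards with s hs
    rw [hφrep s hs.2.le, intervalIntegral.integral_of_le hs.2.le,
      MeasureTheory.integral_Ioc_eq_integral_Ioo]
  -- integrability of pieces
  have hbd : ∀ᵐ t ∂(volume.restrict (Ioo 0 T)), |(-deriv φ t)| ≤ M := by
    filter_upwards [ae_restrict_mem measurableSet_Ioo] with t ht
    exact hM t (Ioo_subset_Icc_self ht)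
  have hF := my_F_int T f hf
  have h1 : IntegrableOn (fun t => -deriv φ t * g t) (Ioo 0 T) := by
    refine Integrable.mono' (hg.norm.const_mul M) (hdc.neg.aestronglyMeasurable.mul hg.1) ?_
    filter_upwards [hbd] with t ht
    rw [Real.norm_eq_abs, abs_mul]
    exact mul_le_mul_of_nonneg_right ht (abs_nonneg _)
  have h2 : IntegrableOn (fun t => -deriv φ t * (∫ s in Ioo 0 t, f s)) (Ioo 0 T) := by
    refine Integrable.mono' (hF.norm.const_mul M) (hdc.neg.aestronglyMeasurable.mul hF.1) ?_
    filter_upwards [hbd] with t ht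
    rw [Real.norm_eq_abs, abs_mul]
    exact mul_le_mul_of_nonneg_right ht (abs_nonneg _)
  have h3 : IntegrableOn (fun t => -deriv φ t * g₀) (Ioo 0 T) :=
    ((hdc.neg.mul continuous_const).continuousOn.integrableOn_Icc).mono_set Ioo_subset_Icc_self
  have hsplit : ∫ t in Ioo 0 T, (-deriv φ t) * (g t - g₀ + ∫ s in Ioo 0 t, f s)
      = (∫ t in Ioo 0 T, -deriv φ t * g t) - (∫ t in Ioo 0 T, -deriv φ t * g₀)
        + ∫ t in Ioo 0 T, -deriv φ t * (∫ s in Ioo 0 t, f s) := by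
    have e : ∫ t in Ioo 0 T, (-deriv φ t) * (g t - g₀ + ∫ s in Ioo 0 t, f s)
        = ∫ t in Ioo 0 T,
            ((-deriv φ t * g t - -deriv φ t * g₀) + -deriv φ t * (∫ s in Ioo 0 t, f s)) := by
      congr 1; funext t; ring
    have h13 : IntegrableOn (fun t => -deriv φ t * g t - -deriv φ t * g₀) (Ioo 0 T) :=
      h1.sub h3
    rw [e, integral_add h13 h2, integral_sub h1 h3]
  rw [hsplit, hfub']
  have e1 : ∫ t in Ioo 0 T, -deriv φ t * g t = -(∫ t in Ioo 0 T, deriv φ t * g t) := by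
    rw [← MeasureTheory.integral_neg]; congr 1; funext t; ring
  have e2 : ∫ t in Ioo 0 T, -deriv φ t * g₀ = φ 0 * g₀ := by
    rw [MeasureTheory.integral_mul_const, ← hφ0]
  rw [e1, e2]


/-- Lemma on the equivalence of the weak (test-function) form and the pointwise a.e.
form of the energy inequality: for `f ∈ L¹(0,T)`, `g ∈ L∞(0,T)` with `g ≥ 0` a.e. and
an initial value `g₀`, the inequality
`−∫₀ᵀ φ' g − φ(0) g₀ + ∫₀ᵀ φ f ≤ 0` for all `C¹` test functions `φ ≥ 0` with `φ' ≤ 0`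
on `[0,T]` and `φ(T) = 0` is equivalent to
`g(t) − g₀ + ∫₀ᵗ f ≤ 0` for a.e. `t ∈ (0,T)`. -/
theorem weak_form_iff_ae_form
    (T : ℝ) (hT : 0 < T) (f g : ℝ → ℝ) (g₀ : ℝ)
    (hf : IntegrableOn f (Ioo 0 T))
    (hg_meas : Measurable g)
    (hg_bdd : ∃ C : ℝ, ∀ᵐ t ∂(volume.restrict (Ioo 0 T)), |g t| ≤ C)
    (hg_nonneg : ∀ᵐ t ∂(volume.restrict (Ioo 0 T)), 0 ≤ g t) :
    (∀ φ : ℝ → ℝ, ContDiff ℝ 1 φ →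
        (∀ t ∈ Icc 0 T, 0 ≤ φ t) → (∀ t ∈ Icc 0 T, deriv φ t ≤ 0) → φ T = 0 →
        -(∫ t in Ioo 0 T, deriv φ t * g t) - φ 0 * g₀ + ∫ t in Ioo 0 T, φ t * f t ≤ 0)
      ↔
    (∀ᵐ t ∂(volume.restrict (Ioo 0 T)), g t - g₀ + ∫ s in Ioo 0 t, f s ≤ 0) := by
  obtain ⟨C, hC⟩ := hg_bdd
  have hg_int : IntegrableOn g (Ioo 0 T) := by
    refine Integrable.mono' (integrable_const C) hg_meas.aestronglyMeasurable ?_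
    filter_upwards [hC] with t ht; rwa [Real.norm_eq_abs]
  have hF_int := my_F_int T f hf
  have hh_int : IntegrableOn (fun t => g t - g₀ + ∫ s in Ioo 0 t, f s) (Ioo 0 T) := by
    have hconst : IntegrableOn (fun _ : ℝ => g₀) (Ioo 0 T) :=
      integrableOn_const measure_Ioo_lt_top.ne
    exact (hg_int.sub hconst).add hF_int
  constructor
  · intro hi
    -- Step 1: test against arbitrary nonnegative continuous functions
    have step1 : ∀ ψ : ℝ → ℝ, Continuous ψ → (∀ x, 0 ≤ ψ x) →
        ∫ t in Ioo 0 T, ψ t * (g t - g₀ + ∫ s in Ioo 0 t, f s) ≤ 0 := by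
      intro ψ hψc hψ0
      set φ : ℝ → ℝ := fun t => -∫ s in T..t, ψ s with hφdef
      have hder : ∀ t, HasDerivAt φ (-ψ t) t := fun t =>
        ((hψc.integral_hasStrictDerivAt T t).hasDerivAt).neg
      have hderiv : deriv φ = fun t => -ψ t := funext fun t => (hder t).deriv
      have hφC1 : ContDiff ℝ 1 φ := contDiff_one_iff_deriv.2
        ⟨fun t => (hder t).differentiableAt, by rw [hderiv]; exact hψc.neg⟩
      have hφT : φ T = 0 := by simp [hφdef]
      have hφsym : ∀ t, φ t = ∫ s in t..T, ψ s := by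
        intro t; rw [hφdef, intervalIntegral.integral_symm]
      have hkey := key_identity T hT f g g₀ hf hg_int φ hφC1 hφT
      have hle := hi φ hφC1
        (fun t ht => by
          rw [hφsym t]; exact intervalIntegral.integral_nonneg ht.2 (fun u _ => hψ0 u))
        (fun t _ => by rw [hderiv]; simpa using hψ0 t) hφT
      rw [hkey] at hle
      calc ∫ t in Ioo 0 T, ψ t * (g t - g₀ + ∫ s in Ioo 0 t, f s)
          = ∫ t in Ioo 0 T, (-deriv φ t) * (g t - g₀ + ∫ s in Ioo 0 t, f s) := by
            congr 1; funext t; rw [hderiv]; ring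
        _ ≤ 0 := hle
    -- Step 2: integrals over closed subintervals are nonpositive
    have step2 : ∀ c d : ℝ, 0 < c → c ≤ d → d < T →
        ∫ t in Icc c d, (g t - g₀ + ∫ s in Ioo 0 t, f s) ≤ 0 := by
      intro c d hc hcd hdT
      set ψ : ℕ → ℝ → ℝ := fun n x =>
        max 0 (min 1 (min ((x - c) * (n + 1) + 1) ((d - x) * (n + 1) + 1))) with hψdef
      have hψc : ∀ n, Continuous (ψ n) := fun n => by
        apply continuous_const.max
        apply continuous_const.min
        exact (((continuous_id.sub continuous_const).mul continuous_const).add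
          continuous_const).min (((continuous_const.sub continuous_id).mul
            continuous_const).add continuous_const)
      have hψ0 : ∀ n x, 0 ≤ ψ n x := fun n x => le_max_left _ _
      have hψ1 : ∀ n x, ψ n x ≤ 1 := fun n x => max_le zero_le_one (min_le_left _ _)
      have hlim : ∀ x : ℝ, Tendsto (fun n => ψ n x * (g x - g₀ + ∫ s in Ioo 0 x, f s)) atTop
          (𝓝 (Set.indicator (Icc c d) (fun t => g t - g₀ + ∫ s in Ioo 0 t, f s) x)) := by
        intro x
        by_cases hx : x ∈ Icc c d
        · have hone : ∀ n, ψ n x = 1 := by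
            intro n
            have hn0 : (0:ℝ) ≤ (n:ℝ) + 1 := by positivity
            have h1 : (1:ℝ) ≤ (x - c) * (n+1) + 1 := by nlinarith [hx.1]
            have h2 : (1:ℝ) ≤ (d - x) * (n+1) + 1 := by nlinarith [hx.2]
            rw [hψdef]
            simp only
            rw [min_eq_left (le_min h1 h2), max_eq_right zero_le_one]
          rw [Set.indicator_of_mem hx]
          simp only [hone, one_mul]
          exact tendsto_const_nhds
        · rw [Set.indicator_of_notMem hx]
          have hzero : ∀ᶠ n in atTop, ψ n x * (g x - g₀ + ∫ s in Ioo 0 x, f s) = 0 := by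
            rw [mem_Icc, not_and_or] at hx
            rcases hx with hx | hx
            · push_neg at hx
              obtain ⟨N, hN⟩ := exists_nat_ge ((c - x)⁻¹)
              filter_upwards [eventually_ge_atTop N] with n hn
              have hcx : 0 < c - x := by linarith
              have h1 : (x - c) * (n+1) + 1 ≤ 0 := by
                have hnn : (N:ℝ) ≤ (n:ℝ) := by exact_mod_cast hn
                have hinv : (c - x)⁻¹ ≤ (n:ℝ) + 1 := by linarith
                have h2 : 1 ≤ (c - x) * ((n:ℝ) + 1) :=
                  calc (1:ℝ) = (c - x) * (c - x)⁻¹ := (mul_inv_cancel₀ (ne_of_gt hcx)).symm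
                    _ ≤ (c - x) * ((n:ℝ) + 1) := mul_le_mul_of_nonneg_left hinv hcx.le
                nlinarith
              have : ψ n x = 0 := by
                rw [hψdef]
                simp only
                rw [max_eq_left]
                exact le_trans (min_le_right _ _) (le_trans (min_le_left _ _) h1)
              rw [this, zero_mul]
            · push_neg at hx
              obtain ⟨N, hN⟩ := exists_nat_ge ((x - d)⁻¹)
              filter_upwards [eventually_ge_atTop N] with n hn
              have hcx : 0 < x - d := by linarith
              have h1 : (d - x) * (n+1) + 1 ≤ 0 := by
                have hnn : (N:ℝ) ≤ (n:ℝ) := by exact_mod_cast hn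
                have hinv : (x - d)⁻¹ ≤ (n:ℝ) + 1 := by linarith
                have h2 : 1 ≤ (x - d) * ((n:ℝ) + 1) :=
                  calc (1:ℝ) = (x - d) * (x - d)⁻¹ := (mul_inv_cancel₀ (ne_of_gt hcx)).symm
                    _ ≤ (x - d) * ((n:ℝ) + 1) := mul_le_mul_of_nonneg_left hinv hcx.le
                nlinarith
              have : ψ n x = 0 := by
                rw [hψdef]
                simp only
                rw [max_eq_left]
                exact le_trans (min_le_right _ _) (le_trans (min_le_right _ _) h1)
              rw [this, zero_mul]
          exact Tendsto.congr' (hzero.mono fun n h => h.symm) tendsto_const_nhds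
      have hDCT := MeasureTheory.tendsto_integral_of_dominated_convergence
        (μ := volume.restrict (Ioo 0 T))
        (F := fun n t => ψ n t * (g t - g₀ + ∫ s in Ioo 0 t, f s))
        (f := Set.indicator (Icc c d) (fun t => g t - g₀ + ∫ s in Ioo 0 t, f s))
        (bound := fun t => |g t - g₀ + ∫ s in Ioo 0 t, f s|)
        (fun n => ((hψc n).aestronglyMeasurable).mul hh_int.1)
        hh_int.norm
        (fun n => Filter.Eventually.of_forall fun t => by
          rw [Real.norm_eq_abs, abs_mul, abs_of_nonneg (hψ0 n t)]
          exact mul_le_of_le_one_left (abs_nonneg _) (hψ1 n t))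
        (Filter.Eventually.of_forall hlim)
      have hle : ∫ t in Ioo 0 T,
          Set.indicator (Icc c d) (fun t => g t - g₀ + ∫ s in Ioo 0 t, f s) t ≤ 0 :=
        le_of_tendsto hDCT (Filter.Eventually.of_forall fun n =>
          step1 (ψ n) (hψc n) (hψ0 n))
      have hsub : Icc c d ⊆ Ioo 0 T := fun x hx => ⟨lt_of_lt_of_le hc hx.1, lt_of_le_of_lt hx.2 hdT⟩
      rwa [MeasureTheory.integral_indicator measurableSet_Icc,
        Measure.restrict_restrict measurableSet_Icc, inter_eq_left.2 hsub] at hle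
    -- Step 3: Lebesgue differentiation
    have htilde_int : Integrable
        (Set.indicator (Ioo 0 T) (fun t => g t - g₀ + ∫ s in Ioo 0 t, f s)) volume :=
      hh_int.integrable_indicator measurableSet_Ioo
    have hLDT := IsUnifLocDoublingMeasure.ae_tendsto_average
      (μ := (volume : Measure ℝ)) htilde_int.locallyIntegrable 1
    have key : ∀ᵐ x ∂(volume.restrict (Ioo 0 T)),
        g x - g₀ + ∫ s in Ioo 0 x, f s ≤ 0 := by
      filter_upwards [ae_restrict_of_ae hLDT, ae_restrict_mem measurableSet_Ioo] with x hx hxm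
      have htend : Tendsto (fun r : ℝ => ⨍ y in Metric.closedBall x r,
          Set.indicator (Ioo 0 T) (fun t => g t - g₀ + ∫ s in Ioo 0 t, f s) y)
          (𝓝[>] 0) (𝓝 (Set.indicator (Ioo 0 T)
            (fun t => g t - g₀ + ∫ s in Ioo 0 t, f s) x)) := by
        apply hx (fun _ : ℝ => x) (fun r : ℝ => r) tendsto_id
        filter_upwards [self_mem_nhdsWithin] with r hr
        exact Metric.mem_closedBall_self (by rw [one_mul]; exact le_of_lt hr)
      rw [Set.indicator_of_mem hxm] at htend
      refine le_of_tendsto htend ?_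
      have hε : 0 < min x (T - x) := lt_min hxm.1 (by linarith [hxm.2])
      filter_upwards [Ioo_mem_nhdsGT_of_mem ⟨le_refl 0, hε⟩] with r hr
      have hr0 : 0 < r := hr.1
      have hrx : r < x := lt_of_lt_of_le hr.2 (min_le_left _ _)
      have hrT : x + r < T := by
        have := lt_of_lt_of_le hr.2 (min_le_right _ _); linarith
      have hball : Metric.closedBall x r = Icc (x - r) (x + r) := Real.closedBall_eq_Icc
      have hsub : Icc (x - r) (x + r) ⊆ Ioo 0 T := fun y hy =>
        ⟨by linarith [hy.1], by linarith [hy.2]⟩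
      rw [setAverage_eq, hball, MeasureTheory.setIntegral_indicator measurableSet_Ioo,
        inter_eq_left.2 hsub, smul_eq_mul]
      have hint : ∫ t in Icc (x - r) (x + r), (g t - g₀ + ∫ s in Ioo 0 t, f s) ≤ 0 :=
        step2 (x - r) (x + r) (by linarith) (by linarith) hrT
      exact mul_nonpos_iff.2 (Or.inl ⟨inv_nonneg.2 ENNReal.toReal_nonneg, hint⟩)
    exact key
  · intro hae φ hφ hnn hd hφT
    rw [key_identity T hT f g g₀ hf hg_int φ hφ hφT]
    refine integral_nonpos_of_ae ?_
    filter_upwards [hae, ae_restrict_mem measurableSet_Ioo] with t ht htm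
    have h1 : 0 ≤ -deriv φ t := neg_nonneg.2 (hd t (Ioo_subset_Icc_self htm))
    exact mul_nonpos_iff.2 (Or.inl ⟨h1, ht⟩)
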